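/- Let V be a complex vector space, let ι : V → (ℓ → ℂ) be a linear map, and let (A_j)_{j ≥ 1} be a family of pairwise commuting linear endomorphisms of V such that for every f ∈ V and every α ∈ ℓ with α ≠ 0, (ι f)(α) = Σ_{j : α_j ≥ 1} (ι(A_j f))(α − e_j) (a finite sum). Then for every f ∈ V and every α ∈ ℓ, (ι f)(α) = (|α|!/α!) · (ι(A^α f))(0), where A^α denotes the finite composition ∏_j A_j^{α_j} (well defined since the A_j commute) and 0 ∈ ℓ is the zero multi-index. -/

import Mathlib

lemma gleason_aux_prod {M : Type*} [Monoid M] (A : ℕ → M)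
    (hcomm : ∀ j k, Commute (A j) (A k)) (β : ℕ →₀ ℕ) (j : ℕ) :
    (β + Finsupp.single j 1).support.noncommProd
        (fun k => A k ^ (β + Finsupp.single j 1 : ℕ →₀ ℕ) k)
        (fun a _ b _ _ => (hcomm a b).pow_pow _ _)
      = (β.support.noncommProd (fun k => A k ^ β k)
          (fun a _ b _ _ => (hcomm a b).pow_pow _ _)) * A j := by
  have hsupp : (β + Finsupp.single j 1).support = insert j β.support := by
    ext k
    rcases eq_or_ne k j with rfl | hk
    · simp [Finsupp.mem_support_iff]
    · simp [Finsupp.mem_support_iff, Finsupp.single_apply, Ne.symm hk, hk]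
  erw [Finset.noncommProd_congr hsupp (fun k _ => rfl) _]
  by_cases hj : j ∈ β.support
  · have h1 : insert j β.support = insert j (β.support.erase j) := by
      rw [Finset.insert_erase hj, Finset.insert_eq_self.mpr hj]
    have herase : β.support = insert j (β.support.erase j) :=
      (Finset.insert_erase hj).symm
    erw [Finset.noncommProd_congr h1 (fun k _ => rfl) _,
      Finset.noncommProd_congr herase (fun k _ => rfl) _,
      Finset.noncommProd_insert_of_notMem _ _ _ _ (Finset.notMem_erase _ _),
      Finset.noncommProd_insert_of_notMem _ _ _ _ (Finset.notMem_erase _ _)]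
    have hQ : (β.support.erase j).noncommProd
          (fun k => A k ^ (β + Finsupp.single j 1 : ℕ →₀ ℕ) k)
          (fun a _ b _ _ => (hcomm a b).pow_pow _ _)
        = (β.support.erase j).noncommProd (fun k => A k ^ β k)
          (fun a _ b _ _ => (hcomm a b).pow_pow _ _) := by
      refine Finset.noncommProd_congr rfl (fun k hk => ?_) _
      have : k ≠ j := Finset.ne_of_mem_erase hk
      simp [Finsupp.single_apply, Ne.symm this]
    rw [hQ]
    have hc : Commute (A j) ((β.support.erase j).noncommProd (fun k => A k ^ β k)
        (fun a _ b _ _ => (hcomm a b).pow_pow _ _)) :=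
      Finset.noncommProd_commute _ _ _ _ (fun k _ => (hcomm j k).pow_right _)
    have happ : (β + Finsupp.single j 1 : ℕ →₀ ℕ) j = β j + 1 := by simp
    rw [happ, pow_succ, mul_assoc, mul_assoc, hc.eq]
  · erw [Finset.noncommProd_insert_of_notMem _ _ _ _ hj]
    have happ : (β + Finsupp.single j 1 : ℕ →₀ ℕ) j = 1 := by
      simp [Finsupp.notMem_support_iff.mp hj]
    have hQ : β.support.noncommProd
          (fun k => A k ^ (β + Finsupp.single j 1 : ℕ →₀ ℕ) k)
          (fun a _ b _ _ => (hcomm a b).pow_pow _ _)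
        = β.support.noncommProd (fun k => A k ^ β k)
          (fun a _ b _ _ => (hcomm a b).pow_pow _ _) := by
      refine Finset.noncommProd_congr rfl (fun k hk => ?_) _
      have : k ≠ j := fun h => hj (h ▸ hk)
      simp [Finsupp.single_apply, Ne.symm this]
    have hc : Commute (A j) (β.support.noncommProd (fun k => A k ^ β k)
        (fun a _ b _ _ => (hcomm a b).pow_pow _ _)) :=
      Finset.noncommProd_commute _ _ _ _ (fun k _ => (hcomm j k).pow_right _)
    rw [happ, pow_one, hQ, hc.eq]

/-- Iterated form of the Gleason decomposition: if the pairwise commuting operators `A_j`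
solve Gleason's problem in coefficient form, then
`(ι f)(α) = (|α|!/α!) (ι (A^α f))(0)`, where `A^α = Π_j A_j^{α_j}`. -/
theorem stmt17 {V : Type*} [AddCommGroup V] [Module ℂ V]
    (ι : V →ₗ[ℂ] ((ℕ →₀ ℕ) → ℂ)) (A : ℕ → Module.End ℂ V)
    (hcomm : ∀ j k, Commute (A j) (A k))
    (hGleason : ∀ (f : V) (α : ℕ →₀ ℕ), α ≠ 0 →
      ι f α = ∑ j ∈ α.support, ι (A j f) (α - Finsupp.single j 1)) :
    ∀ (f : V) (α : ℕ →₀ ℕ),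
      ι f α =
        (((α.sum fun _ n => n).factorial : ℂ) / (α.prod fun _ n => (n.factorial : ℂ))) *
          ι ((α.support.noncommProd (fun j => A j ^ α j)
              (fun j _ k _ _ => Commute.pow_pow (hcomm j k) _ _)) f) 0 := by
  suffices H : ∀ (n : ℕ) (α : ℕ →₀ ℕ), (α.sum fun _ n => n) = n → ∀ f : V,
      ι f α =
        (((α.sum fun _ n => n).factorial : ℂ) / (α.prod fun _ n => (n.factorial : ℂ))) *
          ι ((α.support.noncommProd (fun j => A j ^ α j)
              (fun j _ k _ _ => Commute.pow_pow (hcomm j k) _ _)) f) 0 by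
    intro f α; exact H _ α rfl f
  intro n
  induction n with
  | zero =>
    intro α hα f
    have h0 : α = 0 := by
      ext k
      rcases Nat.eq_zero_or_pos (α k) with h | h
      · simpa using h
      · exfalso
        have hk' : k ∈ α.support := Finsupp.mem_support_iff.mpr (by omega)
        have h2 : α k ≤ ∑ j ∈ α.support, α j := Finset.single_le_sum
          (f := fun j => α j) (fun _ _ => Nat.zero_le _) hk'
        rw [show (∑ j ∈ α.support, α j) = (α.sum fun _ n => n) from rfl, hα] at h2
        omega
    subst h0
    simp [Finsupp.prod_zero_index]
  | succ n IH =>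
    intro α hα f
    have hα0 : α ≠ 0 := by rintro rfl; simp at hα
    have hprodne : ∀ γ : ℕ →₀ ℕ, (γ.prod fun _ n => (n.factorial : ℂ)) ≠ 0 := by
      intro γ
      rw [Finsupp.prod]
      refine Finset.prod_ne_zero_iff.mpr fun k _ => ?_
      exact Nat.cast_ne_zero.mpr (Nat.factorial_ne_zero _)
    -- notation
    set X : ℂ := ι ((α.support.noncommProd (fun j => A j ^ α j)
        (fun j _ k _ _ => Commute.pow_pow (hcomm j k) _ _)) f) 0 with hX
    have hterm : ∀ j ∈ α.support, ι (A j f) (α - Finsupp.single j 1)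
        = ((n.factorial : ℂ) * (α j : ℂ) / (α.prod fun _ n => (n.factorial : ℂ))) * X := by
      intro j hj
      have hαj : 1 ≤ α j := Nat.one_le_iff_ne_zero.mpr (Finsupp.mem_support_iff.mp hj)
      have hle : Finsupp.single j 1 ≤ α := Finsupp.single_le_iff.mpr hαj
      have hβ : (α - Finsupp.single j 1) + Finsupp.single j 1 = α :=
        tsub_add_cancel_of_le hle
      set β : ℕ →₀ ℕ := α - Finsupp.single j 1 with hβdef
      have hβj : β j = α j - 1 := by simp [hβdef, Finsupp.tsub_apply]
      have hβk : ∀ k, k ≠ j → β k = α k := by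
        intro k hk
        simp [hβdef, Finsupp.tsub_apply, Finsupp.single_apply, Ne.symm hk]
      -- sum of β is n
      have hsumβ : (β.sum fun _ n => n) = n := by
        have := Finsupp.sum_add_index' (f := β) (g := Finsupp.single j 1)
          (h := fun (_ : ℕ) (n : ℕ) => n) (fun _ => rfl) (fun _ _ _ => rfl)
        rw [hβ] at this
        rw [Finsupp.sum_single_index (by rfl)] at this
        omega
      -- operator identity
      have hkey : α.support.noncommProd (fun k => A k ^ α k)
            (fun a _ b _ _ => (hcomm a b).pow_pow _ _)
          = (β.support.noncommProd (fun k => A k ^ β k)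
            (fun a _ b _ _ => (hcomm a b).pow_pow _ _)) * A j := by
        conv_lhs => rw [← hβ]
        exact gleason_aux_prod A hcomm β j
      -- product identity
      have hprod : (α.prod fun _ n => (n.factorial : ℂ))
          = (α j : ℂ) * (β.prod fun _ n => (n.factorial : ℂ)) := by
        have hβss : β.support ⊆ α.support := by
          rw [hβdef]; exact Finsupp.support_tsub
        have h1 : (β.prod fun _ n => (n.factorial : ℂ))
            = ∏ k ∈ α.support, ((β k).factorial : ℂ) :=
          Finsupp.prod_of_support_subset _ hβss _ (fun _ _ => by simp)
        rw [h1, Finsupp.prod,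
          ← Finset.mul_prod_erase _ _ hj, ← Finset.mul_prod_erase _ (fun k => ((β k).factorial : ℂ)) hj]
        have h2 : ∏ k ∈ α.support.erase j, ((β k).factorial : ℂ)
            = ∏ k ∈ α.support.erase j, ((α k).factorial : ℂ) :=
          Finset.prod_congr rfl fun k hk => by rw [hβk k (Finset.ne_of_mem_erase hk)]
        rw [h2, hβj, ← mul_assoc]
        congr 1
        rw [← Nat.cast_mul, ← Nat.mul_factorial_pred (by omega)]
      rw [IH β hsumβ (A j f), hsumβ]
      have happly : (β.support.noncommProd (fun k => A k ^ β k)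
            (fun a _ b _ _ => (hcomm a b).pow_pow _ _)) (A j f)
          = (α.support.noncommProd (fun k => A k ^ α k)
            (fun a _ b _ _ => (hcomm a b).pow_pow _ _)) f := by
        rw [hkey]; rfl
      rw [happly, ← hX, hprod]
      congr 1
      have hP := hprodne β
      have hαjC : (α j : ℂ) ≠ 0 := Nat.cast_ne_zero.mpr (by omega)
      field_simp
    rw [hGleason f α hα0, Finset.sum_congr rfl hterm, ← Finset.sum_mul,
      ← Finset.sum_div, ← Finset.mul_sum]
    have hsum : (∑ j ∈ α.support, (α j : ℂ)) = ((n + 1 : ℕ) : ℂ) := by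
      rw [← Nat.cast_sum]
      congr 1
    rw [hsum, hα, Nat.factorial_succ]
    push_cast
    ring
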